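/- Let ξ_n > 0 and η_n > 0 be sequences with ξ_n η_n → 0 and n^{1/2} η_n → e, where 0 ≤ e < ∞. Suppose θ_n ∈ ℝ and σ_n ∈ (0,∞) are sequences such that n^{1/2} θ_n/(σ_n ξ_n) → ν in the extended real line. Then p_n(θ_n, σ_n) → Φ(−ν + e) − Φ(−ν − e) as n → ∞. -/

import Mathlib

open MeasureTheory ProbabilityTheory Filter Set

/-- Standard normal cdf. -/
noncomputable def Phi (x : ℝ) : ℝ :=
  ∫ t in Iic x, (Real.sqrt (2 * Real.pi))⁻¹ * Real.exp (-t ^ 2 / 2)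

/-- Standard normal pdf. -/
noncomputable def stdPhi (t : ℝ) : ℝ :=
  (Real.sqrt (2 * Real.pi))⁻¹ * Real.exp (-t ^ 2 / 2)

/-- Extension of `Phi` to the extended reals, with `PhiE ⊤ = 1` and `PhiE ⊥ = 0`. -/
noncomputable def PhiE (z : EReal) : ℝ :=
  if z = ⊤ then 1 else if z = ⊥ then 0 else Phi z.toReal

/-- Density of `m^{-1/2}` times the square root of a chi-square with `m` degrees of freedom. -/
noncomputable def rho (m : ℕ) (s : ℝ) : ℝ :=
  if 0 < s then
    (2 : ℝ) ^ ((1 : ℝ) - (m : ℝ) / 2) * (Real.Gamma ((m : ℝ) / 2))⁻¹ * Real.sqrt m *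
      ((m : ℝ) * s ^ 2) ^ (((m : ℝ) - 1) / 2) * Real.exp (-(m : ℝ) * s ^ 2 / 2)
  else 0

/-- Known-variance variable deletion probability. -/
noncomputable def pdel (n : ℕ) (ξ η θ σ : ℝ) : ℝ :=
  Phi (Real.sqrt n * (-θ / (σ * ξ) + η)) - Phi (Real.sqrt n * (-θ / (σ * ξ) - η))

lemma stdPhi_integrable : Integrable stdPhi := by
  have h : Integrable (fun t : ℝ => Real.exp (-(1/2 : ℝ) * t ^ 2)) :=
    integrable_exp_neg_mul_sq (by norm_num)
  have h2 := h.const_mul (Real.sqrt (2 * Real.pi))⁻¹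
  have : stdPhi = fun t : ℝ => (Real.sqrt (2 * Real.pi))⁻¹ * Real.exp (-(1/2 : ℝ) * t ^ 2) := by
    funext t
    simp only [stdPhi]
    ring_nf
  rw [this]
  exact h2
lemma integral_stdPhi : ∫ t, stdPhi t = 1 := by
  have : ∫ t : ℝ, stdPhi t =
      (Real.sqrt (2 * Real.pi))⁻¹ * ∫ t : ℝ, Real.exp (-(1/2 : ℝ) * t ^ 2) := by
    rw [← MeasureTheory.integral_const_mul]
    congr 1 with t
    simp only [stdPhi]
    ring_nf
  rw [this, integral_gaussian]
  have : Real.pi / (1/2) = 2 * Real.pi := by ring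
  rw [this]
  rw [inv_mul_cancel₀]
  positivity
lemma Phi_eq (x : ℝ) : Phi x = ∫ t in Iic x, stdPhi t := rfl
lemma Phi_continuous : Continuous Phi := by
  have h : ∀ x : ℝ, Phi x = Phi 0 + ∫ t in (0:ℝ)..x, stdPhi t := by
    intro x
    have := intervalIntegral.integral_Iic_sub_Iic
      (stdPhi_integrable.integrableOn (s := Iic 0)) (stdPhi_integrable.integrableOn (s := Iic x))
    rw [Phi_eq, Phi_eq]
    linarith [this]
  have : Phi = fun x => Phi 0 + ∫ t in (0:ℝ)..x, stdPhi t := funext h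
  rw [this]
  exact continuous_const.add (stdPhi_integrable.continuous_primitive 0)
lemma Phi_neg (x : ℝ) : Phi (-x) = 1 - Phi x := by
  have hc := integral_add_compl (measurableSet_Iic (a := x)) stdPhi_integrable
  rw [compl_Iic, integral_stdPhi] at hc
  have h2 : ∫ t in Ioi x, stdPhi t = ∫ t in Iic (-x), stdPhi t := by
    rw [← integral_comp_neg_Ioi]
    congr 1 with t
    simp [stdPhi]
  rw [Phi_eq, Phi_eq, ← h2]
  linarith
lemma Phi_tendsto_atTop : Tendsto Phi atTop (nhds 1) := by
  have h := tendsto_setIntegral_of_monotone (μ := volume) (f := stdPhi)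
    (s := fun x : ℝ => Iic x) (fun x => measurableSet_Iic)
    (fun a b hab => Iic_subset_Iic.2 hab) (by rw [iUnion_Iic]; exact stdPhi_integrable.integrableOn)
  rw [iUnion_Iic] at h
  simp [Phi_eq, integral_stdPhi] at h
  exact h
lemma Phi_tendsto_atBot : Tendsto Phi atBot (nhds 0) := by
  have h : Tendsto (fun x : ℝ => 1 - Phi (-x)) atBot (nhds (1 - 1)) :=
    tendsto_const_nhds.sub (Phi_tendsto_atTop.comp tendsto_neg_atBot_atTop)
  simp only [sub_self] at h
  refine h.congr fun x => ?_
  rw [Phi_neg]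
  ring
lemma PhiE_coe (r : ℝ) : PhiE (r : EReal) = Phi r := by
  simp [PhiE]

/-- conservative tuning, moving-parameter limit of the deletion probability. -/
theorem stmt_1 (ξ η : ℕ → ℝ) (hξ : ∀ n, 0 < ξ n) (hη : ∀ n, 0 < η n)
    (hxe : Tendsto (fun n : ℕ => ξ n * η n) atTop (nhds 0))
    (e : ℝ) (he : 0 ≤ e)
    (hne : Tendsto (fun n : ℕ => Real.sqrt n * η n) atTop (nhds e))
    (θ σ : ℕ → ℝ) (hσ : ∀ n, 0 < σ n)
    (ν : EReal)
    (hν : Tendsto (fun n : ℕ => ((Real.sqrt n * θ n / (σ n * ξ n) : ℝ) : EReal)) atTop (nhds ν)) :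
    Tendsto (fun n : ℕ => pdel n (ξ n) (η n) (θ n) (σ n)) atTop
      (nhds (PhiE (-ν + (e : EReal)) - PhiE (-ν - (e : EReal)))) := by
  set A : ℕ → ℝ := fun n => Real.sqrt n * θ n / (σ n * ξ n) with hA_def
  set B : ℕ → ℝ := fun n => Real.sqrt n * η n with hB_def
  have hpdel : ∀ n, pdel n (ξ n) (η n) (θ n) (σ n) = Phi (-A n + B n) - Phi (-A n - B n) := by
    intro n
    simp only [pdel, hA_def, hB_def]
    congr 2 <;> ring
  have hconv : ∀ n, (fun n : ℕ => pdel n (ξ n) (η n) (θ n) (σ n)) n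
      = (fun n => Phi (-A n + B n) - Phi (-A n - B n)) n := hpdel
  induction ν using EReal.rec with
  | bot =>
    -- A → -∞, both args → +∞, Phi → 1, diff → 0
    have hA : Tendsto A atTop atBot := by
      rw [tendsto_atBot]
      intro x
      have := EReal.tendsto_nhds_bot_iff_real.mp hν x
      filter_upwards [this] with n hn
      exact le_of_lt (by exact_mod_cast hn)
    have hnegA : Tendsto (fun n => -A n) atTop atTop := tendsto_neg_atBot_atTop.comp hA
    have h1 : Tendsto (fun n => -A n + B n) atTop atTop := by
      have := (hne.add_atTop hnegA)
      refine this.congr fun n => ?_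
      ring
    have h2 : Tendsto (fun n => -A n - B n) atTop atTop := by
      have := ((hne.neg).add_atTop hnegA)
      refine this.congr fun n => ?_
      ring
    have := (Phi_tendsto_atTop.comp h1).sub (Phi_tendsto_atTop.comp h2)
    rw [sub_self] at this
    have hRHS : PhiE (-(⊥ : EReal) + (e : EReal)) - PhiE (-(⊥ : EReal) - (e : EReal)) = 0 := by
      simp [PhiE, EReal.neg_bot, sub_eq_add_neg, ← EReal.coe_neg]
    rw [hRHS]
    exact this.congr fun n => (hpdel n).symm
  | top =>
    have hA : Tendsto A atTop atTop := by
      rw [tendsto_atTop]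
      intro x
      have := EReal.tendsto_nhds_top_iff_real.mp hν x
      filter_upwards [this] with n hn
      exact le_of_lt (by exact_mod_cast hn)
    have hnegA : Tendsto (fun n => -A n) atTop atBot := tendsto_neg_atTop_atBot.comp hA
    have h1 : Tendsto (fun n => -A n + B n) atTop atBot := by
      have := (hne.add_atBot hnegA)
      refine this.congr fun n => ?_
      ring
    have h2 : Tendsto (fun n => -A n - B n) atTop atBot := by
      have := ((hne.neg).add_atBot hnegA)
      refine this.congr fun n => ?_
      ring
    have := (Phi_tendsto_atBot.comp h1).sub (Phi_tendsto_atBot.comp h2)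
    rw [sub_self] at this
    have hRHS : PhiE (-(⊤ : EReal) + (e : EReal)) - PhiE (-(⊤ : EReal) - (e : EReal)) = 0 := by
      simp [PhiE, EReal.neg_top, sub_eq_add_neg, ← EReal.coe_neg]
    rw [hRHS]
    exact this.congr fun n => (hpdel n).symm
  | coe x =>
    have hA : Tendsto A atTop (nhds x) := EReal.tendsto_coe.mp hν
    have h1 : Tendsto (fun n => -A n + B n) atTop (nhds (-x + e)) := (hA.neg).add hne
    have h2 : Tendsto (fun n => -A n - B n) atTop (nhds (-x - e)) := (hA.neg).sub hne
    have := ((Phi_continuous.tendsto _).comp h1).sub ((Phi_continuous.tendsto _).comp h2)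
    have hRHS : PhiE (-(x : EReal) + (e : EReal)) - PhiE (-(x : EReal) - (e : EReal))
        = Phi (-x + e) - Phi (-x - e) := by
      rw [← EReal.coe_neg, ← EReal.coe_add, ← EReal.coe_sub, PhiE_coe, PhiE_coe]
    rw [hRHS]
    exact this.congr fun n => (hpdel n).symm
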